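/- Let M be an n-dimensional k-vector space with basis m₁, …, mₙ and let R : M ⊗ M → M ⊗ M be the k-linear map given by R(m_v ⊗ m_u) = ∑_{i,j} x_{uv}^{ji} m_i ⊗ m_j for a family of scalars (x_{uv}^{ji}). Then R is a solution of the Long equation if and only if, for all indices i, j, k, l, p, q ∈ {1, …, n}, both ∑_v x_{kv}^{ji} x_{ql}^{pv} = ∑_α x_{kl}^{jα} x_{qα}^{pi} and ∑_v x_{kv}^{ji} x_{lq}^{vp} = ∑_α x_{kl}^{jα} x_{αq}^{ip} hold. -/

import Mathlib

open TensorProduct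

noncomputable section

variable {k M : Type*} [Field k] [AddCommGroup M] [Module k M]

/-- The flip map τ : M ⊗ M → M ⊗ M, τ(m ⊗ n) = n ⊗ m. -/
def tau (k M : Type*) [Field k] [AddCommGroup M] [Module k M] :
    M ⊗[k] M →ₗ[k] M ⊗[k] M := (TensorProduct.comm k M M).toLinearMap

/-- R¹² = R ⊗ id on M ⊗ (M ⊗ M) (transported along the associator). -/
def R12 (R : M ⊗[k] M →ₗ[k] M ⊗[k] M) :
    M ⊗[k] (M ⊗[k] M) →ₗ[k] M ⊗[k] (M ⊗[k] M) :=
  (TensorProduct.assoc k M M M).toLinearMap ∘ₗ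
    TensorProduct.map R LinearMap.id ∘ₗ (TensorProduct.assoc k M M M).symm.toLinearMap

/-- R²³ = id ⊗ R on M ⊗ (M ⊗ M). -/
def R23 (R : M ⊗[k] M →ₗ[k] M ⊗[k] M) :
    M ⊗[k] (M ⊗[k] M) →ₗ[k] M ⊗[k] (M ⊗[k] M) :=
  TensorProduct.map LinearMap.id R

/-- R¹³ = (id ⊗ τ)(R ⊗ id)(id ⊗ τ) on M ⊗ (M ⊗ M). -/
def R13 (R : M ⊗[k] M →ₗ[k] M ⊗[k] M) :
    M ⊗[k] (M ⊗[k] M) →ₗ[k] M ⊗[k] (M ⊗[k] M) :=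
  TensorProduct.map LinearMap.id (tau k M) ∘ₗ R12 R ∘ₗ
    TensorProduct.map LinearMap.id (tau k M)

/-- R is a solution of the Long equation: R¹²R¹³ = R¹³R¹² and R¹²R²³ = R²³R¹². -/
def IsLongSolution (R : M ⊗[k] M →ₗ[k] M ⊗[k] M) : Prop :=
  R12 R ∘ₗ R13 R = R13 R ∘ₗ R12 R ∧ R12 R ∘ₗ R23 R = R23 R ∘ₗ R12 R

end

section Aux

open TensorProduct

variable {k M : Type*} [Field k] [AddCommGroup M] [Module k M]
variable {n : ℕ} (m : Module.Basis (Fin n) k M) (x : Fin n → Fin n → Fin n → Fin n → k)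
    (R : M ⊗[k] M →ₗ[k] M ⊗[k] M)
    (hR : ∀ u v, R (m v ⊗ₜ[k] m u) = ∑ i, ∑ j, x u v j i • (m i ⊗ₜ[k] m j))

include hR in
lemma r12_apply (a b c : Fin n) :
    R12 R (m a ⊗ₜ[k] (m b ⊗ₜ[k] m c)) =
      ∑ i, ∑ j, x b a j i • (m i ⊗ₜ[k] (m j ⊗ₜ[k] m c)) := by
  simp [R12, hR, sum_tmul, smul_tmul']

include hR in
lemma r23_apply (a b c : Fin n) :
    R23 R (m a ⊗ₜ[k] (m b ⊗ₜ[k] m c)) =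
      ∑ i, ∑ j, x c b j i • (m a ⊗ₜ[k] (m i ⊗ₜ[k] m j)) := by
  simp [R23, hR, tmul_sum, tmul_smul]

include hR in
lemma r13_apply (a b c : Fin n) :
    R13 R (m a ⊗ₜ[k] (m b ⊗ₜ[k] m c)) =
      ∑ i, ∑ j, x c a j i • (m i ⊗ₜ[k] (m b ⊗ₜ[k] m j)) := by
  simp [R13, tau, r12_apply m x R hR, map_sum]

include hR in
lemma comp1213 (a b c : Fin n) :
    (R12 R ∘ₗ R13 R) (m a ⊗ₜ[k] (m b ⊗ₜ[k] m c)) =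
      ∑ i, ∑ j, ∑ p, ∑ q, (x c a j i * x b i q p) • (m p ⊗ₜ[k] (m q ⊗ₜ[k] m j)) := by
  simp [r13_apply m x R hR, map_sum, r12_apply m x R hR, Finset.smul_sum, smul_smul]

include hR in
lemma comp1312 (a b c : Fin n) :
    (R13 R ∘ₗ R12 R) (m a ⊗ₜ[k] (m b ⊗ₜ[k] m c)) =
      ∑ i, ∑ j, ∑ p, ∑ q, (x b a j i * x c i q p) • (m p ⊗ₜ[k] (m j ⊗ₜ[k] m q)) := by
  simp [r12_apply m x R hR, map_sum, r13_apply m x R hR, Finset.smul_sum, smul_smul]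

include hR in
lemma comp1223 (a b c : Fin n) :
    (R12 R ∘ₗ R23 R) (m a ⊗ₜ[k] (m b ⊗ₜ[k] m c)) =
      ∑ i, ∑ j, ∑ p, ∑ q, (x c b j i * x i a q p) • (m p ⊗ₜ[k] (m q ⊗ₜ[k] m j)) := by
  simp [r23_apply m x R hR, map_sum, r12_apply m x R hR, Finset.smul_sum, smul_smul]

include hR in
lemma comp2312 (a b c : Fin n) :
    (R23 R ∘ₗ R12 R) (m a ⊗ₜ[k] (m b ⊗ₜ[k] m c)) =
      ∑ i, ∑ j, ∑ p, ∑ q, (x b a j i * x c j q p) • (m i ⊗ₜ[k] (m p ⊗ₜ[k] m q)) := by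
  simp [r12_apply m x R hR, map_sum, r23_apply m x R hR, Finset.smul_sum, smul_smul]

lemma repr_pqj (f : Fin n → Fin n → Fin n → Fin n → k) (P Q S : Fin n) :
    (Module.Basis.tensorProduct m (Module.Basis.tensorProduct m m)).repr
      (∑ i, ∑ j, ∑ p, ∑ q, f i j p q • (m p ⊗ₜ[k] (m q ⊗ₜ[k] m j))) (P,(Q,S))
      = ∑ i, f i S P Q := by
  simp [map_sum, Finsupp.finset_sum_apply, Module.Basis.tensorProduct_repr_tmul_apply,
    Finsupp.single_apply, Finset.sum_ite_eq, Finset.sum_ite_eq', mul_ite, ite_and]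

lemma repr_pjq (f : Fin n → Fin n → Fin n → Fin n → k) (P Q S : Fin n) :
    (Module.Basis.tensorProduct m (Module.Basis.tensorProduct m m)).repr
      (∑ i, ∑ j, ∑ p, ∑ q, f i j p q • (m p ⊗ₜ[k] (m j ⊗ₜ[k] m q))) (P,(Q,S))
      = ∑ i, f i Q P S := by
  simp [map_sum, Finsupp.finset_sum_apply, Module.Basis.tensorProduct_repr_tmul_apply,
    Finsupp.single_apply, Finset.sum_ite_eq, Finset.sum_ite_eq', mul_ite, ite_and]

lemma repr_ipq (f : Fin n → Fin n → Fin n → Fin n → k) (P Q S : Fin n) :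
    (Module.Basis.tensorProduct m (Module.Basis.tensorProduct m m)).repr
      (∑ i, ∑ j, ∑ p, ∑ q, f i j p q • (m i ⊗ₜ[k] (m p ⊗ₜ[k] m q))) (P,(Q,S))
      = ∑ j, f P j Q S := by
  simp [map_sum, Finsupp.finset_sum_apply, Module.Basis.tensorProduct_repr_tmul_apply,
    Finsupp.single_apply, Finset.sum_ite_eq, Finset.sum_ite_eq', mul_ite, ite_and]

include hR in
lemma long1_iff :
    (R12 R ∘ₗ R13 R = R13 R ∘ₗ R12 R) ↔
      ∀ i j kk l p q, ∑ v, x kk v j i * x q l p v = ∑ a, x kk l j a * x q a p i := by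
  constructor
  · intro h i j kk l p q
    have := congrArg
        (fun F : M ⊗[k] (M ⊗[k] M) →ₗ[k] M ⊗[k] (M ⊗[k] M) =>
          (Module.Basis.tensorProduct m (Module.Basis.tensorProduct m m)).repr
            (F (m l ⊗ₜ[k] (m kk ⊗ₜ[k] m q))) (i,(j,p))) h
    simp only [comp1213 m x R hR, comp1312 m x R hR, repr_pqj, repr_pjq] at this
    calc ∑ v, x kk v j i * x q l p v = ∑ v, x q l p v * x kk v j i := by
          simp [mul_comm]
      _ = ∑ a, x kk l j a * x q a p i := this
  · intro h
    apply Module.Basis.ext (Module.Basis.tensorProduct m (Module.Basis.tensorProduct m m))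
    rintro ⟨a, b, c⟩
    simp only [Module.Basis.tensorProduct_apply]
    apply (Module.Basis.tensorProduct m (Module.Basis.tensorProduct m m)).repr.injective
    ext ⟨P, Q, S⟩
    simp only [comp1213 m x R hR, comp1312 m x R hR, repr_pqj, repr_pjq]
    calc ∑ v, x c a S v * x b v Q P = ∑ v, x b v Q P * x c a S v := by
          simp [mul_comm]
      _ = ∑ v, x b a Q v * x c v S P := h P Q b a S c

include hR in
lemma long2_iff :
    (R12 R ∘ₗ R23 R = R23 R ∘ₗ R12 R) ↔
      ∀ i j kk l p q, ∑ v, x kk v j i * x l q v p = ∑ a, x kk l j a * x a q i p := by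
  constructor
  · intro h i j kk l p q
    have := congrArg
        (fun F : M ⊗[k] (M ⊗[k] M) →ₗ[k] M ⊗[k] (M ⊗[k] M) =>
          (Module.Basis.tensorProduct m (Module.Basis.tensorProduct m m)).repr
            (F (m q ⊗ₜ[k] (m l ⊗ₜ[k] m kk))) (p,(i,j))) h
    simp only [comp1223 m x R hR, comp2312 m x R hR, repr_pqj, repr_ipq] at this
    calc ∑ v, x kk v j i * x l q v p = ∑ v, x l q v p * x kk v j i := by
          simp [mul_comm]
      _ = ∑ a, x kk l j a * x a q i p := this.symm
  · intro h
    apply Module.Basis.ext (Module.Basis.tensorProduct m (Module.Basis.tensorProduct m m))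
    rintro ⟨a, b, c⟩
    simp only [Module.Basis.tensorProduct_apply]
    apply (Module.Basis.tensorProduct m (Module.Basis.tensorProduct m m)).repr.injective
    ext ⟨P, Q, S⟩
    simp only [comp1223 m x R hR, comp2312 m x R hR, repr_pqj, repr_ipq]
    calc ∑ v, x c b S v * x v a Q P = ∑ v, x c v S Q * x b a v P := (h Q S c b P a).symm
      _ = ∑ v, x b a v P * x c v S Q := by simp [mul_comm]

end Aux

theorem long_equation_iff_structure_constants
    {k M : Type*} [Field k] [AddCommGroup M] [Module k M]
    {n : ℕ} (m : Module.Basis (Fin n) k M)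
    (x : Fin n → Fin n → Fin n → Fin n → k)
    (R : M ⊗[k] M →ₗ[k] M ⊗[k] M)
    (hR : ∀ u v, R (m v ⊗ₜ[k] m u) = ∑ i, ∑ j, x u v j i • (m i ⊗ₜ[k] m j)) :
    IsLongSolution R ↔
      ((∀ i j kk l p q, ∑ v, x kk v j i * x q l p v = ∑ a, x kk l j a * x q a p i) ∧
       (∀ i j kk l p q, ∑ v, x kk v j i * x l q v p = ∑ a, x kk l j a * x a q i p)) := by
  unfold IsLongSolution
  rw [long1_iff m x R hR, long2_iff m x R hR]
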